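/- (Discrete non-commutative hungry Toda-I lattice from orthogonality.) Define ω_n^{(α)} := H_{n−1}^{(α+1)}·(H_{n−1}^{(α)})^{−1} for n ≥ 1 and ε_n^{(α)} := H_n^{(α)}·(H_{n−1}^{(α+θ)})^{−1} for n ≥ 1, with ε_0^{(α)} := 0. Then for all n ≥ 1 and α ∈ ℕ the discrete non-commutative hungry Toda-I lattice holds: ω_{n+1}^{(α)}·ε_n^{(α)} = ε_n^{(α+1)}·ω_n^{(α+θ)} and ω_n^{(α+θ)} + ε_{n−1}^{(α+1)} = ω_n^{(α)} + ε_n^{(α)}. -/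

import Mathlib

open MeasureTheory Polynomial Matrix Filter

/-- Evaluation of a matrix polynomial at a real scalar. -/
noncomputable def mpEval {p : ℕ} (f : Polynomial (Matrix (Fin p) (Fin p) ℝ)) (x : ℝ) :
    Matrix (Fin p) (Fin p) ℝ :=
  f.sum fun k a => x ^ k • a

/-- The adjacent matrix-valued θ-deformed bilinear form
`⟨f, g⟩_θ^α = ∫ f(x) · x^α · W(x) · g(x^θ)ᵀ dx`, computed entrywise. -/
noncomputable def bform {p : ℕ} (θ : ℕ) (W : ℝ → Matrix (Fin p) (Fin p) ℝ) (α : ℕ)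
    (f g : Polynomial (Matrix (Fin p) (Fin p) ℝ)) : Matrix (Fin p) (Fin p) ℝ :=
  Matrix.of fun i j => ∫ x : ℝ, (mpEval f x * (x ^ α • W x) * (mpEval g (x ^ θ))ᵀ) i j

/-- A matrix polynomial is monic of degree `n`: the `x^n` coefficient is `I_p`
and all higher coefficients vanish. -/
def MonicDeg {p : ℕ} (f : Polynomial (Matrix (Fin p) (Fin p) ℝ)) (n : ℕ) : Prop :=
  f.coeff n = 1 ∧ ∀ k : ℕ, n < k → f.coeff k = 0

/-- The k-th moment `m_k = ∫ x^k W(x) dx`, computed entrywise. -/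
noncomputable def mom {p : ℕ} (W : ℝ → Matrix (Fin p) (Fin p) ℝ) (k : ℕ) :
    Matrix (Fin p) (Fin p) ℝ :=
  Matrix.of fun i j => ∫ x : ℝ, x ^ k * W x i j

/-- The block moment matrix `M_n^{(α)} = (m_{α+i+jθ})_{i,j=0}^{n-1}`, as an
`n × n` matrix over the ring of `p × p` real matrices. -/
noncomputable def momMat {p : ℕ} (θ : ℕ) (W : ℝ → Matrix (Fin p) (Fin p) ℝ) (n α : ℕ) :
    Matrix (Fin n) (Fin n) (Matrix (Fin p) (Fin p) ℝ) :=
  Matrix.of fun i j => mom W (α + (i : ℕ) + (j : ℕ) * θ)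

section Aux

variable {p : ℕ} (θ : ℕ) (W : ℝ → Matrix (Fin p) (Fin p) ℝ)

lemma mpEval_X_pow (i : ℕ) (y : ℝ) :
    mpEval (X ^ i : Polynomial (Matrix (Fin p) (Fin p) ℝ)) y = y ^ i • 1 := by
  rw [mpEval, X_pow_eq_monomial, Polynomial.sum_monomial_index]
  exact smul_zero _

lemma mpEval_eq_sum (n : ℕ) (f : Polynomial (Matrix (Fin p) (Fin p) ℝ))
    (hf : ∀ k, n ≤ k → f.coeff k = 0) (x : ℝ) :
    mpEval f x = ∑ k ∈ Finset.range n, x ^ k • f.coeff k := by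
  rw [mpEval, Polynomial.sum_def]
  refine Finset.sum_subset ?_ ?_
  · intro k hk
    simp only [Finset.mem_range]
    by_contra h
    exact (Polynomial.mem_support_iff.mp hk) (hf k (le_of_not_gt h))
  · intro k _ hk
    rw [Polynomial.notMem_support_iff.mp hk, smul_zero]

/-- The subleading coefficient, with convention `c 0 = 0`. -/
noncomputable def subCoeff {p : ℕ} (P : ℕ → ℕ → Polynomial (Matrix (Fin p) (Fin p) ℝ))
    (n a : ℕ) : Matrix (Fin p) (Fin p) ℝ := (X * P n a).coeff n

lemma subCoeff_zero (P : ℕ → ℕ → Polynomial (Matrix (Fin p) (Fin p) ℝ)) (a : ℕ) :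
    subCoeff P 0 a = 0 := by
  simp [subCoeff, Polynomial.mul_coeff_zero]

lemma subCoeff_succ (P : ℕ → ℕ → Polynomial (Matrix (Fin p) (Fin p) ℝ)) (n a : ℕ) :
    subCoeff P (n + 1) a = (P (n + 1) a).coeff n := by
  rw [subCoeff, Polynomial.coeff_X_mul]

variable (hWint : ∀ (k : ℕ) (i j : Fin p), Integrable fun x : ℝ => x ^ k * W x i j)
include hWint

lemma integrable_entry (m : ℕ) (C : Matrix (Fin p) (Fin p) ℝ) (i' j' : Fin p) :
    Integrable fun x : ℝ => x ^ m * (C * W x) i' j' := by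
  have h : (fun x : ℝ => x ^ m * (C * W x) i' j')
      = fun x => ∑ l, C i' l * (x ^ m * W x l j') := by
    funext x
    rw [Matrix.mul_apply, Finset.mul_sum]
    exact Finset.sum_congr rfl fun l _ => by ring
  rw [h]
  exact integrable_finset_sum _ (fun l _ => (hWint m l j').const_mul _)

lemma integral_entry (m : ℕ) (C : Matrix (Fin p) (Fin p) ℝ) (i' j' : Fin p) :
    (∫ x : ℝ, x ^ m * (C * W x) i' j') = (C * mom W m) i' j' := by
  have h : (fun x : ℝ => x ^ m * (C * W x) i' j')
      = fun x => ∑ l, C i' l * (x ^ m * W x l j') := by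
    funext x
    rw [Matrix.mul_apply, Finset.mul_sum]
    exact Finset.sum_congr rfl fun l _ => by ring
  rw [h, integral_finset_sum _ (fun l _ => (hWint m l j').const_mul _)]
  rw [Matrix.mul_apply]
  refine Finset.sum_congr rfl fun l _ => ?_
  rw [MeasureTheory.integral_const_mul]
  rfl

lemma bform_expand (α n : ℕ) (f : Polynomial (Matrix (Fin p) (Fin p) ℝ))
    (hf : ∀ k, n ≤ k → f.coeff k = 0) (i : ℕ) :
    bform θ W α f (X ^ i) =
      ∑ k ∈ Finset.range n, f.coeff k * mom W (α + k + i * θ) := by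
  ext i' j'
  simp only [bform, Matrix.of_apply]
  have hint : ∀ x : ℝ,
      (mpEval f x * (x ^ α • W x) *
        (mpEval (X ^ i : Polynomial (Matrix (Fin p) (Fin p) ℝ)) (x ^ θ))ᵀ) i' j'
      = ∑ k ∈ Finset.range n, x ^ (α + k + i * θ) * (f.coeff k * W x) i' j' := by
    intro x
    rw [mpEval_X_pow, mpEval_eq_sum n f hf, Matrix.transpose_smul, Matrix.transpose_one,
        Finset.sum_mul, Finset.sum_mul, Matrix.sum_apply]
    refine Finset.sum_congr rfl fun k _ => ?_
    rw [smul_mul_assoc, mul_smul_comm, smul_mul_assoc, mul_smul_comm, mul_one,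
        smul_smul, smul_smul, Matrix.smul_apply, smul_eq_mul]
    congr 1
    rw [← pow_mul, ← pow_add, ← pow_add]
    congr 1
    ring
  simp_rw [hint]
  rw [MeasureTheory.integral_finset_sum _ (fun k _ => integrable_entry W hWint _ _ i' j'),
      Matrix.sum_apply]
  exact Finset.sum_congr rfl fun k _ => integral_entry W hWint _ _ i' j'

omit hWint in
lemma sums0 (n α : ℕ) (hM : 1 ≤ n → IsUnit (momMat θ W n α))
    (v : ℕ → Matrix (Fin p) (Fin p) ℝ)
    (horth : ∀ i < n, ∑ k ∈ Finset.range n, v k * mom W (α + k + i * θ) = 0) :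
    ∀ k < n, v k = 0 := by
  intro k hk
  have hu := hM (by omega)
  have hvec : Matrix.vecMul (fun j : Fin n => v j) (momMat θ W n α) = 0 := by
    funext i
    have h := horth i i.isLt
    rw [Finset.sum_range (fun k => v k * mom W (α + k + i * θ))] at h
    simpa [Matrix.vecMul, dotProduct, momMat] using h
  have hone : momMat θ W n α * Ring.inverse (momMat θ W n α) = 1 :=
    Ring.mul_inverse_cancel _ hu
  have hv : (fun j : Fin n => v j) = 0 := by
    calc (fun j : Fin n => v j)
        = Matrix.vecMul (fun j : Fin n => v j)
            (momMat θ W n α * Ring.inverse (momMat θ W n α)) := by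
          rw [hone, Matrix.vecMul_one]
      _ = Matrix.vecMul (Matrix.vecMul (fun j : Fin n => v j) (momMat θ W n α))
            (Ring.inverse (momMat θ W n α)) := by
          rw [Matrix.vecMul_vecMul]
      _ = 0 := by rw [hvec, Matrix.zero_vecMul]
  exact congrFun hv ⟨k, hk⟩

variable (hM : ∀ (n α : ℕ), 1 ≤ n → IsUnit (momMat θ W n α))
variable (P : ℕ → ℕ → Polynomial (Matrix (Fin p) (Fin p) ℝ))
variable (hPmonic : ∀ n α : ℕ, MonicDeg (P n α) n)
variable (hPorth : ∀ n α : ℕ, ∀ i < n, bform θ W α (P n α) (X ^ i) = 0)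
variable (H : ℕ → ℕ → Matrix (Fin p) (Fin p) ℝ)
variable (hHdef : ∀ n α : ℕ, H n α = bform θ W α (P n α) (X ^ n))
include hM hPmonic hPorth hHdef

lemma key1 (n α : ℕ) :
    H n (α + 1) = (subCoeff P n (α + 1) - subCoeff P (n + 1) α) * H n α := by
  set g := P n (α + 1) with hg
  set Cst := subCoeff P n (α + 1) - subCoeff P (n + 1) α with hCst
  have hgco : ∀ k, n + 1 ≤ k → g.coeff k = 0 := fun k hk => (hPmonic n (α + 1)).2 k (by omega)
  have hPn1co : ∀ k, n + 2 ≤ k → (P (n + 1) α).coeff k = 0 :=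
    fun k hk => (hPmonic (n + 1) α).2 k (by omega)
  have hPnco : ∀ k, n + 2 ≤ k → (P n α).coeff k = 0 :=
    fun k hk => (hPmonic n α).2 k (by omega)
  have hA : ∀ i : ℕ, ∑ k ∈ Finset.range (n + 2), (X * g).coeff k * mom W (α + k + i * θ)
      = bform θ W (α + 1) g (X ^ i) := by
    intro i
    rw [bform_expand θ W hWint (α + 1) (n + 1) g hgco i, Finset.sum_range_succ']
    have h0 : (X * g).coeff 0 = 0 := by simp [Polynomial.mul_coeff_zero]
    rw [h0, zero_mul, add_zero]
    refine Finset.sum_congr rfl fun k _ => ?_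
    rw [Polynomial.coeff_X_mul, show α + (k + 1) + i * θ = α + 1 + k + i * θ from by omega]
  have hB : ∀ i : ℕ, ∑ k ∈ Finset.range (n + 2), (P (n + 1) α).coeff k * mom W (α + k + i * θ)
      = bform θ W α (P (n + 1) α) (X ^ i) :=
    fun i => (bform_expand θ W hWint α (n + 2) (P (n + 1) α) hPn1co i).symm
  have hC : ∀ i : ℕ, ∑ k ∈ Finset.range (n + 2), (P n α).coeff k * mom W (α + k + i * θ)
      = bform θ W α (P n α) (X ^ i) :=
    fun i => (bform_expand θ W hWint α (n + 2) (P n α) hPnco i).symm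
  set v : ℕ → Matrix (Fin p) (Fin p) ℝ :=
    fun k => (X * g).coeff k - (P (n + 1) α).coeff k - Cst * (P n α).coeff k with hv
  have hsplit : ∀ i : ℕ, ∑ k ∈ Finset.range (n + 2), v k * mom W (α + k + i * θ)
      = bform θ W (α + 1) g (X ^ i) - bform θ W α (P (n + 1) α) (X ^ i)
        - Cst * bform θ W α (P n α) (X ^ i) := by
    intro i
    rw [← hA i, ← hB i, ← hC i, Finset.mul_sum, ← Finset.sum_sub_distrib,
        ← Finset.sum_sub_distrib]
    exact Finset.sum_congr rfl fun k _ => by rw [hv, sub_mul, sub_mul, mul_assoc]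
  have hvn : v n = 0 := by
    have h1 : (X * g).coeff n = subCoeff P n (α + 1) := rfl
    have h2 : (P (n + 1) α).coeff n = subCoeff P (n + 1) α := (subCoeff_succ P n α).symm
    rw [hv]
    simp only [h1, h2, (hPmonic n α).1, mul_one, hCst]
    abel
  have hvn1 : v (n + 1) = 0 := by
    rw [hv]
    simp only [hg, Polynomial.coeff_X_mul, (hPmonic n (α + 1)).1, (hPmonic (n + 1) α).1,
      (hPmonic n α).2 (n + 1) (by omega), mul_zero, sub_zero]
    exact sub_self _
  have hdrop : ∀ i : ℕ, ∑ k ∈ Finset.range n, v k * mom W (α + k + i * θ)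
      = ∑ k ∈ Finset.range (n + 2), v k * mom W (α + k + i * θ) := by
    intro i
    rw [Finset.sum_range_succ, Finset.sum_range_succ, hvn, hvn1, zero_mul, zero_mul,
        add_zero, add_zero]
  have horth' : ∀ i < n, ∑ k ∈ Finset.range n, v k * mom W (α + k + i * θ) = 0 := by
    intro i hi
    rw [hdrop i, hsplit i, hPorth n (α + 1) i hi, hPorth (n + 1) α i (by omega),
        hPorth n α i hi, mul_zero, sub_zero, sub_zero]
  have hv0 : ∀ k < n, v k = 0 := sums0 θ W n α (fun _ => hM n α (by omega)) v horth'
  have hzero : ∑ k ∈ Finset.range (n + 2), v k * mom W (α + k + n * θ) = 0 := by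
    rw [← hdrop n]
    exact Finset.sum_eq_zero fun k hk => by
      rw [hv0 k (Finset.mem_range.mp hk), zero_mul]
  have hfin := hsplit n
  rw [hzero, hPorth (n + 1) α n (by omega), sub_zero, ← hHdef n (α + 1), ← hHdef n α] at hfin
  have := sub_eq_zero.mp hfin.symm
  exact this.symm ▸ rfl

lemma key2 (n α : ℕ) :
    H (n + 1) α = (subCoeff P (n + 1) α - subCoeff P (n + 1) (α + θ)) * H n (α + θ) := by
  set g1 := P (n + 1) α with hg1
  set g2 := P (n + 1) (α + θ) with hg2
  set g3 := P n (α + θ) with hg3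
  set D := subCoeff P (n + 1) α - subCoeff P (n + 1) (α + θ) with hD
  have hg1co : ∀ k, n + 2 ≤ k → g1.coeff k = 0 := fun k hk => (hPmonic (n + 1) α).2 k (by omega)
  have hg2co : ∀ k, n + 2 ≤ k → g2.coeff k = 0 :=
    fun k hk => (hPmonic (n + 1) (α + θ)).2 k (by omega)
  have hg3co : ∀ k, n + 2 ≤ k → g3.coeff k = 0 := fun k hk => (hPmonic n (α + θ)).2 k (by omega)
  have hS1 : ∀ i : ℕ, ∑ k ∈ Finset.range (n + 2), g1.coeff k * mom W (α + θ + k + i * θ)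
      = bform θ W α g1 (X ^ (i + 1)) := by
    intro i
    rw [bform_expand θ W hWint α (n + 2) g1 hg1co (i + 1)]
    refine Finset.sum_congr rfl fun k _ => ?_
    rw [show α + θ + k + i * θ = α + k + (i + 1) * θ from by ring]
  have hS2 : ∀ i : ℕ, ∑ k ∈ Finset.range (n + 2), g2.coeff k * mom W (α + θ + k + i * θ)
      = bform θ W (α + θ) g2 (X ^ i) :=
    fun i => (bform_expand θ W hWint (α + θ) (n + 2) g2 hg2co i).symm
  have hS3 : ∀ i : ℕ, ∑ k ∈ Finset.range (n + 2), g3.coeff k * mom W (α + θ + k + i * θ)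
      = bform θ W (α + θ) g3 (X ^ i) :=
    fun i => (bform_expand θ W hWint (α + θ) (n + 2) g3 hg3co i).symm
  set v : ℕ → Matrix (Fin p) (Fin p) ℝ :=
    fun k => g1.coeff k - g2.coeff k - D * g3.coeff k with hv
  have hsplit : ∀ i : ℕ, ∑ k ∈ Finset.range (n + 2), v k * mom W (α + θ + k + i * θ)
      = bform θ W α g1 (X ^ (i + 1)) - bform θ W (α + θ) g2 (X ^ i)
        - D * bform θ W (α + θ) g3 (X ^ i) := by
    intro i
    rw [← hS1 i, ← hS2 i, ← hS3 i, Finset.mul_sum, ← Finset.sum_sub_distrib,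
        ← Finset.sum_sub_distrib]
    exact Finset.sum_congr rfl fun k _ => by rw [hv, sub_mul, sub_mul, mul_assoc]
  have hvn : v n = 0 := by
    have h1 : g1.coeff n = subCoeff P (n + 1) α := (subCoeff_succ P n α).symm
    have h2 : g2.coeff n = subCoeff P (n + 1) (α + θ) := (subCoeff_succ P n (α + θ)).symm
    rw [hv]
    simp only [h1, h2, hg3, (hPmonic n (α + θ)).1, mul_one, hD]
    abel
  have hvn1 : v (n + 1) = 0 := by
    rw [hv]
    simp only [hg1, hg2, hg3, (hPmonic (n + 1) α).1, (hPmonic (n + 1) (α + θ)).1,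
      (hPmonic n (α + θ)).2 (n + 1) (by omega), mul_zero, sub_zero]
    exact sub_self _
  have hdrop : ∀ i : ℕ, ∑ k ∈ Finset.range n, v k * mom W (α + θ + k + i * θ)
      = ∑ k ∈ Finset.range (n + 2), v k * mom W (α + θ + k + i * θ) := by
    intro i
    rw [Finset.sum_range_succ, Finset.sum_range_succ, hvn, hvn1, zero_mul, zero_mul,
        add_zero, add_zero]
  have horth' : ∀ i < n, ∑ k ∈ Finset.range n, v k * mom W (α + θ + k + i * θ) = 0 := by
    intro i hi
    rw [hdrop i, hsplit i, hPorth (n + 1) α (i + 1) (by omega),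
        hPorth (n + 1) (α + θ) i (by omega), hPorth n (α + θ) i hi, mul_zero,
        sub_zero, sub_zero]
  have hv0 : ∀ k < n, v k = 0 := sums0 θ W n (α + θ) (fun _ => hM n (α + θ) (by omega)) v horth'
  have hzero : ∑ k ∈ Finset.range (n + 2), v k * mom W (α + θ + k + n * θ) = 0 := by
    rw [← hdrop n]
    exact Finset.sum_eq_zero fun k hk => by
      rw [hv0 k (Finset.mem_range.mp hk), zero_mul]
  have hfin := hsplit n
  rw [hzero, hPorth (n + 1) (α + θ) n (by omega), sub_zero, ← hHdef (n + 1) α,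
      ← hHdef n (α + θ)] at hfin
  have := sub_eq_zero.mp hfin.symm
  exact this.symm ▸ rfl

end Aux

/-- discrete non-commutative hungry Toda-I lattice from
orthogonality, with `ω_n^{(α)} = H_{n-1}^{(α+1)}·(H_{n-1}^{(α)})⁻¹` (n ≥ 1),
`ε_n^{(α)} = H_n^{(α)}·(H_{n-1}^{(α+θ)})⁻¹` (n ≥ 1) and `ε_0^{(α)} = 0`. -/
theorem statement11
    (p θ : ℕ) (hp : 1 ≤ p) (hθ : 1 ≤ θ)
    (W : ℝ → Matrix (Fin p) (Fin p) ℝ)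
    (hWmeas : ∀ i j : Fin p, Measurable fun x : ℝ => W x i j)
    (hWint : ∀ (k : ℕ) (i j : Fin p), Integrable fun x : ℝ => x ^ k * W x i j)
    (hM : ∀ (n α : ℕ), 1 ≤ n → IsUnit (momMat θ W n α))
    (P Q : ℕ → ℕ → Polynomial (Matrix (Fin p) (Fin p) ℝ))
    (hPmonic : ∀ n α : ℕ, MonicDeg (P n α) n)
    (hPorth : ∀ n α : ℕ, ∀ i < n, bform θ W α (P n α) (X ^ i) = 0)
    (hQmonic : ∀ n α : ℕ, MonicDeg (Q n α) n)
    (hQorth : ∀ n α : ℕ, ∀ i < n, bform θ W α (X ^ i) (Q n α) = 0)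
    (H : ℕ → ℕ → Matrix (Fin p) (Fin p) ℝ)
    (hHdef : ∀ n α : ℕ, H n α = bform θ W α (P n α) (X ^ n))
    (hHunit : ∀ n α : ℕ, IsUnit (H n α))
    (ω ε : ℕ → ℕ → Matrix (Fin p) (Fin p) ℝ)
    (hω : ∀ n α : ℕ, ω (n + 1) α = H n (α + 1) * Ring.inverse (H n α))
    (hε0 : ∀ α : ℕ, ε 0 α = 0)
    (hε : ∀ n α : ℕ, ε (n + 1) α = H (n + 1) α * Ring.inverse (H n (α + θ))) :
    ∀ n : ℕ, 1 ≤ n → ∀ α : ℕ,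
      ω (n + 1) α * ε n α = ε n (α + 1) * ω n (α + θ) ∧
      ω n (α + θ) + ε (n - 1) (α + 1) = ω n α + ε n α := by
  have k1 := key1 θ W hWint hM P hPmonic hPorth H hHdef
  have k2 := key2 θ W hWint hM P hPmonic hPorth H hHdef
  have hcan : ∀ a b : ℕ, H a b * Ring.inverse (H a b) = 1 :=
    fun a b => Ring.mul_inverse_cancel _ (hHunit a b)
  have ωeq : ∀ m β : ℕ, ω (m + 1) β = subCoeff P m (β + 1) - subCoeff P (m + 1) β := by
    intro m β
    rw [hω m β, k1 m β, mul_assoc, hcan, mul_one]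
  have εeq : ∀ m β : ℕ, ε m β = subCoeff P m β - subCoeff P m (β + θ) := by
    intro m β
    match m with
    | 0 => rw [hε0 β, subCoeff_zero, subCoeff_zero, sub_zero]
    | m + 1 => rw [hε m β, k2 m β, mul_assoc, hcan, mul_one]
  intro n hn α
  obtain ⟨m, rfl⟩ : ∃ m, n = m + 1 := ⟨n - 1, by omega⟩
  constructor
  · rw [hω (m + 1) α, hε m α, hε m (α + 1), hω m (α + θ)]
    calc H (m + 1) (α + 1) * Ring.inverse (H (m + 1) α)
          * (H (m + 1) α * Ring.inverse (H m (α + θ)))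
        = H (m + 1) (α + 1)
          * ((Ring.inverse (H (m + 1) α) * H (m + 1) α) * Ring.inverse (H m (α + θ))) := by
          rw [mul_assoc, mul_assoc]
      _ = H (m + 1) (α + 1) * Ring.inverse (H m (α + θ)) := by
          rw [Ring.inverse_mul_cancel _ (hHunit (m + 1) α), one_mul]
      _ = H (m + 1) (α + 1)
          * ((Ring.inverse (H m (α + 1 + θ)) * H m (α + θ + 1)) * Ring.inverse (H m (α + θ))) := by
          rw [show α + θ + 1 = α + 1 + θ from by omega,
            Ring.inverse_mul_cancel _ (hHunit m (α + 1 + θ)), one_mul]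
      _ = H (m + 1) (α + 1) * Ring.inverse (H m (α + 1 + θ))
          * (H m (α + θ + 1) * Ring.inverse (H m (α + θ))) := by
          rw [mul_assoc, mul_assoc]
  · have e1 := ωeq m (α + θ)
    have e2 := εeq m (α + 1)
    have e3 := ωeq m α
    have e4 := εeq (m + 1) α
    rw [show m + 1 - 1 = m from rfl, e1, e2, e3, e4,
      show α + θ + 1 = α + 1 + θ from by omega]
    abel
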